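/- Let θ be a ternary relation on ℕ, X ⊆ ℕ a finite set and n ∈ ℕ. If X is ω^{n+2}-large*(θ) and exp-sparse, then for every coloring f : X → {0,…,min X−1} there is an f-homogeneous ω^n-large*(θ) subset of X (f-homogeneous means f is constant on the subset). -/

import Mathlib

/-- The minimum of a finite set of naturals (`0` if empty). -/
noncomputable def minN (X : Finset ℕ) : ℕ := sInf (X : Set ℕ)

/-- The maximum of a finite set of naturals (`0` if empty). -/
def maxN (X : Finset ℕ) : ℕ := X.sup id

/-- `E` lies entirely below `F`. -/
def SetBelow (E F : Finset ℕ) : Prop := ∀ x ∈ E, ∀ y ∈ F, x < y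

/-- `E` and `F` are `θ`-apart: for every `x < max E` there is `y < min F`
with `θ x y z` for all `z < max F`. -/
def ThetaApart (θ : ℕ → ℕ → ℕ → Prop) (E F : Finset ℕ) : Prop :=
  ∀ x < maxN E, ∃ y < minN F, ∀ z < maxN F, θ x y z

/-- `L·k`: finite sets containing `k` pairwise `θ`-apart members `X₀ < ⋯ < X_{k-1}` of `L`. -/
def MulK (θ : ℕ → ℕ → ℕ → Prop) (L : Set (Finset ℕ)) (k : ℕ) : Set (Finset ℕ) :=
  {F | ∃ X : Fin k → Finset ℕ, (∀ i, X i ∈ L) ∧ (∀ i, X i ⊆ F) ∧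
    ∀ i j, i < j → SetBelow (X i) (X j) ∧ ThetaApart θ (X i) (X j)}

/-- `L·σ` for a finite sequence `σ`: `L·ε = L`, `L·(k⌢τ) = (L·k)·τ`. -/
def MulSeq (θ : ℕ → ℕ → ℕ → Prop) (L : Set (Finset ℕ)) : List ℕ → Set (Finset ℕ)
  | [] => L
  | k :: τ => MulSeq θ (MulK θ L k) τ

/-- `L^θ_n`: the `ω^n`-large*(θ) finite sets. -/
noncomputable def LargeStar (θ : ℕ → ℕ → ℕ → Prop) : ℕ → Set (Finset ℕ)
  | 0 => {X | X.Nonempty}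
  | n + 1 => {X | X.Nonempty ∧
      X.erase (minN X) ∈ MulSeq θ (LargeStar θ n) (List.replicate (n + 1) (minN X))}

/-- `ω^n`-largeness(θ) (the non-starred notion). -/
noncomputable def LargeTheta (θ : ℕ → ℕ → ℕ → Prop) : ℕ → Set (Finset ℕ)
  | 0 => {X | X.Nonempty}
  | n + 1 => {X | X.Nonempty ∧ X.erase (minN X) ∈ MulK θ (LargeTheta θ n) (minN X)}

/-- `L·k` without θ-apartness (plain largeness product). -/
def MulKPlain (L : Set (Finset ℕ)) (k : ℕ) : Set (Finset ℕ) :=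
  {F | ∃ X : Fin k → Finset ℕ, (∀ i, X i ∈ L) ∧ (∀ i, X i ⊆ F) ∧
    ∀ i j, i < j → SetBelow (X i) (X j)}

/-- Ketonen–Solovay `ω^n`-largeness (no θ). -/
noncomputable def LargePlain : ℕ → Set (Finset ℕ)
  | 0 => {X | X.Nonempty}
  | n + 1 => {X | X.Nonempty ∧ X.erase (minN X) ∈ MulKPlain (LargePlain n) (minN X)}

/-- `g`-sparsity. -/
def GSparse (g : ℕ → ℕ) (X : Finset ℕ) : Prop := ∀ x ∈ X, ∀ y ∈ X, x < y → g x < y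

/-- exp-sparsity. -/
def ExpSparse (X : Finset ℕ) : Prop := ∀ x ∈ X, ∀ y ∈ X, x < y → 4 ^ x < y

/-- `ω^k`-sparsity. -/
def OmegaSparse (k : ℕ) (X : Finset ℕ) : Prop :=
  ∀ x ∈ X, ∀ y ∈ X, x < y → Finset.Ioc x y ∈ LargePlain k

section Helpers

variable {θ : ℕ → ℕ → ℕ → Prop}

lemma minN_mem {X : Finset ℕ} (h : X.Nonempty) : minN X ∈ X := by
  have h' : (X : Set ℕ).Nonempty := by exact_mod_cast h
  exact_mod_cast Nat.sInf_mem h'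

lemma minN_le {X : Finset ℕ} {x : ℕ} (hx : x ∈ X) : minN X ≤ x :=
  Nat.sInf_le (by exact_mod_cast hx)

lemma le_maxN {X : Finset ℕ} {x : ℕ} (hx : x ∈ X) : x ≤ maxN X :=
  Finset.le_sup (f := id) hx

lemma maxN_mem {X : Finset ℕ} (h : X.Nonempty) : maxN X ∈ X := by
  obtain ⟨b, hb, he⟩ := Finset.exists_mem_eq_sup X h id
  rw [maxN, he]; exact hb

lemma minN_insert_eq {Y : Finset ℕ} {a : ℕ} (h : ∀ x ∈ Y, a < x) :
    minN (insert a Y) = a := by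
  refine le_antisymm (Nat.sInf_le (by simp)) (le_csInf ⟨a, by simp⟩ ?_)
  rintro b hb
  simp only [Finset.coe_insert, Set.mem_insert_iff, Finset.mem_coe] at hb
  rcases hb with rfl | hb
  · exact le_refl _
  · exact (h b hb).le

lemma largeStar_nonempty {n : ℕ} {X : Finset ℕ} (h : X ∈ LargeStar θ n) : X.Nonempty := by
  cases n with
  | zero => exact h
  | succ n => exact h.1

lemma mulSeq_nil (L : Set (Finset ℕ)) : MulSeq θ L [] = L := rfl

lemma mulSeq_cons (L : Set (Finset ℕ)) (k : ℕ) (τ : List ℕ) :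
    MulSeq θ L (k :: τ) = MulSeq θ (MulK θ L k) τ := rfl

lemma mulSeq_append (σ τ : List ℕ) (L : Set (Finset ℕ)) :
    MulSeq θ L (σ ++ τ) = MulSeq θ (MulSeq θ L σ) τ := by
  induction σ generalizing L with
  | nil => rfl
  | cons k σ ih => simp only [List.cons_append, mulSeq_cons, ih]

lemma mulK_mono {L L' : Set (Finset ℕ)} (h : L ⊆ L') (k : ℕ) :
    MulK θ L k ⊆ MulK θ L' k := by
  rintro F ⟨W, h1, h2, h3⟩
  exact ⟨W, fun i => h (h1 i), h2, h3⟩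

lemma mulSeq_mono {L L' : Set (Finset ℕ)} (h : L ⊆ L') (σ : List ℕ) :
    MulSeq θ L σ ⊆ MulSeq θ L' σ := by
  induction σ generalizing L L' with
  | nil => exact h
  | cons k τ ih => exact ih (mulK_mono h k)

lemma mulK_anti {a b : ℕ} (h : a ≤ b) (L : Set (Finset ℕ)) :
    MulK θ L b ⊆ MulK θ L a := by
  rintro F ⟨W, h1, h2, h3⟩
  refine ⟨fun i => W (Fin.castLE h i), fun i => h1 _, fun i => h2 _, ?_⟩
  intro i j hij
  refine h3 _ _ ?_
  rw [Fin.lt_def, Fin.coe_castLE, Fin.coe_castLE]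
  exact Fin.lt_def.mp hij

lemma mulSeq_rep_anti {a b : ℕ} (h : a ≤ b) (r : ℕ) (L : Set (Finset ℕ)) :
    MulSeq θ L (List.replicate r b) ⊆ MulSeq θ L (List.replicate r a) := by
  induction r generalizing L with
  | zero => exact subset_rfl
  | succ r ih =>
      intro F hF
      rw [List.replicate_succ, mulSeq_cons] at hF ⊢
      exact mulSeq_mono (mulK_anti h L) _ (ih (MulK θ L b) hF)

lemma mulSeq_rep_exists_sub {k : ℕ} (hk : 1 ≤ k) (r : ℕ) (L : Set (Finset ℕ))
    {F : Finset ℕ} (hF : F ∈ MulSeq θ L (List.replicate r k)) :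
    ∃ P ∈ L, P ⊆ F := by
  induction r generalizing L with
  | zero => exact ⟨F, hF, subset_rfl⟩
  | succ r ih =>
      rw [List.replicate_succ, mulSeq_cons] at hF
      obtain ⟨Q, ⟨W, h1, h2, _⟩, hQF⟩ := ih _ hF
      exact ⟨W ⟨0, hk⟩, h1 _, (h2 _).trans hQF⟩

lemma setBelow_mono {E E' F F' : Finset ℕ} (hE : E' ⊆ E) (hF : F' ⊆ F)
    (h : SetBelow E F) : SetBelow E' F' :=
  fun x hx y hy => h x (hE hx) y (hF hy)

lemma thetaApart_mono {E E' F F' : Finset ℕ} (hE : E' ⊆ E) (hF : F' ⊆ F)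
    (hF' : F'.Nonempty) (h : ThetaApart θ E F) : ThetaApart θ E' F' := by
  intro x hx
  have hx' : x < maxN E := lt_of_lt_of_le hx (Finset.sup_mono hE)
  obtain ⟨y, hy, hz⟩ := h x hx'
  refine ⟨y, lt_of_lt_of_le hy (minN_le (hF (minN_mem hF'))), ?_⟩
  intro z hzlt
  exact hz z (lt_of_lt_of_le hzlt (Finset.sup_mono hF))

lemma aux_pow {M : ℕ} (h : 2 ≤ M) : M * M + M + 1 ≤ 4 ^ M := by
  induction M with
  | zero => omega
  | succ M ih =>
      rcases Nat.lt_or_ge M 2 with hM | hM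
      · interval_cases M <;> norm_num
      · have h4 : 4 ^ (M + 1) = 4 * 4 ^ M := by ring
        have := ih hM
        nlinarith

end Helpers
/-- From one level-`(r+1)` nested structure over `LargeStar θ (n+1)` with branching `ν`,
extract a colour-homogeneous level-`r` nested structure over `LargeStar θ n`
with branching `d`, provided `ν` is big enough. -/
lemma tree (θ : ℕ → ℕ → ℕ → Prop) (X : Finset ℕ) (f : ℕ → ℕ) (m n : ℕ)
    (hf : ∀ x ∈ X, f x < m)
    (ih : ∀ Z : Fin (m + 1) → Finset ℕ, (∀ j, Z j ⊆ X.erase m) →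
      (∀ j, Z j ∈ LargeStar θ (n + 1)) →
      (∀ i j : Fin (m + 1), i < j → SetBelow (Z i) (Z j)) →
      ∃ Y, Y ⊆ Finset.univ.biUnion Z ∧ Y ∈ LargeStar θ n ∧
        ∀ x ∈ Y, ∀ y ∈ Y, f x = f y) :
    ∀ (r d ν : ℕ) (G : Finset ℕ), 1 ≤ d → m * d + m + 1 ≤ ν → G ⊆ X.erase m →
      G ∈ MulSeq θ (LargeStar θ (n + 1)) (List.replicate (r + 1) ν) →
      ∃ i < m, ∃ T : Finset ℕ, T ⊆ G ∧ T.Nonempty ∧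
        T ∈ MulSeq θ (LargeStar θ n) (List.replicate r d) ∧ ∀ x ∈ T, f x = i := by
  intro r
  induction r with
  | zero =>
      intro d ν G hd hν hGsub hG
      have hG' : G ∈ MulK θ (LargeStar θ (n + 1)) ν := hG
      obtain ⟨W, hWL, hWsub, hWp⟩ := hG'
      have hm1 : m + 1 ≤ ν := le_trans (by omega) hν
      set Z : Fin (m + 1) → Finset ℕ := fun j => W (Fin.castLE hm1 j) with hZ
      have hZbel : ∀ i j : Fin (m + 1), i < j → SetBelow (Z i) (Z j) := by
        intro i j hij
        refine (hWp _ _ ?_).1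
        rw [Fin.lt_def, Fin.coe_castLE, Fin.coe_castLE]
        exact Fin.lt_def.mp hij
      obtain ⟨Y, hYsub, hYL, hYhom⟩ := ih Z
        (fun j => (hWsub _).trans hGsub) (fun j => hWL _) hZbel
      obtain ⟨y₀, hy₀⟩ := largeStar_nonempty hYL
      have hYG : Y ⊆ G := by
        refine hYsub.trans (Finset.biUnion_subset.mpr ?_)
        intro j _
        exact hWsub _
      have hy₀X : y₀ ∈ X := Finset.mem_of_mem_erase (hGsub (hYG hy₀))
      exact ⟨f y₀, hf y₀ hy₀X, Y, hYG, ⟨y₀, hy₀⟩, hYL,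
        fun x hx => hYhom x hx y₀ hy₀⟩
  | succ r IHr =>
      intro d ν G hd hν hGsub hG
      rw [List.replicate_succ' (n := r + 1), mulSeq_append] at hG
      have hG' : G ∈ MulK θ (MulSeq θ (LargeStar θ (n + 1)) (List.replicate (r + 1) ν)) ν := hG
      obtain ⟨Gk, hGkM, hGksub, hGkp⟩ := hG'
      have key := fun k : Fin ν =>
        IHr d ν (Gk k) hd hν ((hGksub k).trans hGsub) (hGkM k)
      choose i hi T hTsub hTne hTmul hThom using key
      -- pigeonhole on colours
      have hmaps : ∀ k ∈ (Finset.univ : Finset (Fin ν)), i k ∈ Finset.range m :=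
        fun k _ => Finset.mem_range.mpr (hi k)
      have hcard : (Finset.range m).card * d < (Finset.univ : Finset (Fin ν)).card := by
        rw [Finset.card_range, Finset.card_univ, Fintype.card_fin]
        calc m * d < m * d + m + 1 := by omega
        _ ≤ ν := hν
      obtain ⟨y, hy, hyc⟩ :=
        Finset.exists_lt_card_fiber_of_mul_lt_card_of_maps_to hmaps hcard
      obtain ⟨S, hSsub, hScard⟩ := Finset.exists_subset_card_eq hyc.le
      set emb := S.orderEmbOfFin hScard with hemb
      have hembS : ∀ j : Fin d, emb j ∈ S := fun j => Finset.orderEmbOfFin_mem S hScard j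
      have hcol : ∀ j : Fin d, i (emb j) = y := by
        intro j
        have := hSsub (hembS j)
        exact (Finset.mem_filter.mp this).2
      refine ⟨y, Finset.mem_range.mp hy,
        Finset.univ.biUnion (fun j : Fin d => T (emb j)), ?_, ?_, ?_, ?_⟩
      · refine Finset.biUnion_subset.mpr fun j _ => (hTsub _).trans ((hGksub _).trans ?_)
        exact subset_rfl
      · obtain ⟨x, hx⟩ := hTne (emb ⟨0, hd⟩)
        exact ⟨x, Finset.mem_biUnion.mpr ⟨⟨0, hd⟩, Finset.mem_univ _, hx⟩⟩
      · rw [List.replicate_succ' (n := r), mulSeq_append]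
        refine ⟨fun j => T (emb j), fun j => hTmul _,
          fun j => Finset.subset_biUnion_of_mem (fun j' => T (emb j')) (Finset.mem_univ j), ?_⟩
        intro a b hab
        have hlt : emb a < emb b := emb.strictMono hab
        obtain ⟨hbel, hap⟩ := hGkp _ _ hlt
        exact ⟨setBelow_mono (hTsub _) (hTsub _) hbel,
          thetaApart_mono (hTsub _) (hTsub _) (hTne _) hap⟩
      · intro x hx
        obtain ⟨j, _, hxj⟩ := Finset.mem_biUnion.mp hx
        rw [hThom _ x hxj, hcol j]
/-- Main lemma: from `m+1` stacked `ω^(n+1)`-large*(θ) pieces inside an exp-sparse ambient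
set with colours `< m`, extract a homogeneous `ω^n`-large*(θ) set. -/
lemma main_lemma (θ : ℕ → ℕ → ℕ → Prop) (X : Finset ℕ) (f : ℕ → ℕ) (m : ℕ)
    (h3 : 3 ≤ m) (hgt : ∀ x ∈ X.erase m, m < x) (hsp : ExpSparse X)
    (hf : ∀ x ∈ X, f x < m) :
    ∀ (n : ℕ) (Z : Fin (m + 1) → Finset ℕ), (∀ j, Z j ⊆ X.erase m) →
      (∀ j, Z j ∈ LargeStar θ (n + 1)) →
      (∀ i j : Fin (m + 1), i < j → SetBelow (Z i) (Z j)) →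
      ∃ Y, Y ⊆ Finset.univ.biUnion Z ∧ Y ∈ LargeStar θ n ∧
        ∀ x ∈ Y, ∀ y ∈ Y, f x = f y := by
  intro n
  induction n with
  | zero =>
      intro Z hZsub hZL hZbelow
      obtain ⟨y, hy⟩ := largeStar_nonempty (hZL 0)
      refine ⟨{y}, ?_, ⟨y, Finset.mem_singleton_self y⟩, ?_⟩
      · exact Finset.singleton_subset_iff.mpr
          (Finset.mem_biUnion.mpr ⟨0, Finset.mem_univ _, hy⟩)
      · intro x hx y' hy'
        rw [Finset.mem_singleton] at hx hy'
        rw [hx, hy']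
  | succ n IH =>
      intro Z hZsub hZL hZbelow
      have hne : ∀ j, (Z j).Nonempty := fun j => largeStar_nonempty (hZL j)
      set J : Fin m → Fin (m + 1) := fun j => ⟨j.val + 1, by omega⟩ with hJ
      set Jp : Fin m → Fin (m + 1) := fun j => ⟨j.val, by omega⟩ with hJp
      have key : ∀ j : Fin m, ∃ i < m, ∃ T : Finset ℕ,
          T ⊆ (Z (J j)).erase (minN (Z (J j))) ∧ T.Nonempty ∧
          T ∈ MulSeq θ (LargeStar θ n) (List.replicate (n + 1) (maxN (Z (Jp j)) + 1)) ∧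
          ∀ x ∈ T, f x = i := by
        intro j
        have hMmem : maxN (Z (Jp j)) ∈ Z (Jp j) := maxN_mem (hne _)
        have hMX : maxN (Z (Jp j)) ∈ X := Finset.mem_of_mem_erase (hZsub _ hMmem)
        have hmM : m < maxN (Z (Jp j)) := hgt _ (hZsub _ hMmem)
        have hνmem : minN (Z (J j)) ∈ Z (J j) := minN_mem (hne _)
        have hνX : minN (Z (J j)) ∈ X := Finset.mem_of_mem_erase (hZsub _ hνmem)
        have hJpJ : Jp j < J j := by rw [Fin.lt_def]; simp [hJ, hJp]
        have hMν : maxN (Z (Jp j)) < minN (Z (J j)) :=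
          hZbelow _ _ hJpJ _ hMmem _ hνmem
        have h4 : 4 ^ maxN (Z (Jp j)) < minN (Z (J j)) := hsp _ hMX _ hνX hMν
        have haux : maxN (Z (Jp j)) * maxN (Z (Jp j)) + maxN (Z (Jp j)) + 1
            ≤ 4 ^ maxN (Z (Jp j)) := aux_pow (by omega)
        have hmul : (m + 1) * (maxN (Z (Jp j)) + 1)
            ≤ maxN (Z (Jp j)) * (maxN (Z (Jp j)) + 1) :=
          Nat.mul_le_mul_right _ (by omega)
        have hbound : m * (maxN (Z (Jp j)) + 1) + m + 1 ≤ minN (Z (J j)) := by nlinarith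
        obtain ⟨hZne, hmem⟩ := hZL (J j)
        exact tree θ X f m n hf IH (n + 1) (maxN (Z (Jp j)) + 1) (minN (Z (J j)))
          ((Z (J j)).erase (minN (Z (J j)))) (by omega) hbound
          ((Finset.erase_subset _ _).trans (hZsub _)) hmem
      choose i hi T hTsub hTne hTmul hThom using key
      have hTZ : ∀ j, T j ⊆ Z (J j) := fun j => (hTsub j).trans (Finset.erase_subset _ _)
      have finish : ∀ (j : Fin m) (k : Fin (m + 1)) (μ : ℕ), k < J j → μ ∈ Z k →
          f μ = i j →
          ∃ Y, Y ⊆ Finset.univ.biUnion Z ∧ Y ∈ LargeStar θ (n + 1) ∧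
            ∀ x ∈ Y, ∀ y ∈ Y, f x = f y := by
        intro j k μ hkJ hμk hfμ
        have hμM : μ ≤ maxN (Z (Jp j)) := by
          rcases Nat.lt_or_ge k.val j.val with h | h
          · exact le_of_lt (hZbelow k (Jp j) (by rw [Fin.lt_def]; simpa [hJp] using h)
              μ hμk _ (maxN_mem (hne _)))
          · have hkeq : k = Jp j := by
              have hv := Fin.lt_def.mp hkJ
              simp only [hJ] at hv
              refine Fin.ext ?_
              simp only [hJp]
              omega
            rw [hkeq] at hμk
            exact le_maxN hμk
        have hμT : ∀ x ∈ T j, μ < x := fun x hx =>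
          hZbelow k (J j) hkJ μ hμk x (hTZ j hx)
        have hμnot : μ ∉ T j := fun h => lt_irrefl μ (hμT μ h)
        refine ⟨insert μ (T j), ?_, ?_, ?_⟩
        · intro x hx
          rcases Finset.mem_insert.mp hx with rfl | hx
          · exact Finset.mem_biUnion.mpr ⟨k, Finset.mem_univ _, hμk⟩
          · exact Finset.mem_biUnion.mpr ⟨J j, Finset.mem_univ _, hTZ j hx⟩
        · refine ⟨Finset.insert_nonempty _ _, ?_⟩
          rw [minN_insert_eq hμT, Finset.erase_insert hμnot]
          exact mulSeq_rep_anti (show μ ≤ maxN (Z (Jp j)) + 1 by omega) (n + 1) _ (hTmul j)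
        · have hval : ∀ z ∈ insert μ (T j), f z = i j := by
            intro z hz
            rcases Finset.mem_insert.mp hz with rfl | hz
            · exact hfμ
            · exact hThom j z hz
          intro x hx y hy
          rw [hval x hx, hval y hy]
      set g : Fin m → Fin m := fun j => ⟨i j, hi j⟩ with hg
      by_cases hinj : Function.Injective g
      · have hsurj : Function.Surjective g := Finite.injective_iff_surjective.mp hinj
        obtain ⟨e, he⟩ := hne 0
        have heX : e ∈ X := Finset.mem_of_mem_erase (hZsub _ he)
        obtain ⟨j, hj⟩ := hsurj ⟨f e, hf e heX⟩
        have hfe : f e = i j := by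
          have hv := congrArg Fin.val hj
          simp only [hg] at hv
          exact hv.symm
        refine finish j 0 e ?_ he hfe
        rw [Fin.lt_def]
        simp [hJ]
      · rw [Function.not_injective_iff] at hinj
        obtain ⟨a, b, hgab, hab⟩ := hinj
        have hiab : i a = i b := by
          have hv := congrArg Fin.val hgab
          simpa [hg] using hv
        rcases Nat.lt_or_ge a.val b.val with h | h
        · obtain ⟨μ, hμ⟩ := hTne a
          refine finish b (J a) μ ?_ (hTZ a hμ) ?_
          · rw [Fin.lt_def]; simp [hJ]; omega
          · rw [hThom a μ hμ, hiab]
        · have h' : b.val < a.val := by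
            rcases Nat.lt_or_ge b.val a.val with h'' | h''
            · exact h''
            · exact absurd (Fin.ext (by omega)) hab
          obtain ⟨μ, hμ⟩ := hTne b
          refine finish a (J b) μ ?_ (hTZ b hμ) ?_
          · rw [Fin.lt_def]; simp [hJ]; omega
          · rw [hThom b μ hμ, ← hiab]
/-- pigeonhole principle with min X colors. -/
theorem stmt_11 (θ : ℕ → ℕ → ℕ → Prop) (n : ℕ) (X : Finset ℕ)
    (h3 : 3 ≤ minN X)
    (hX : X ∈ LargeStar θ (n + 2))
    (hsp : ExpSparse X)
    (f : ℕ → ℕ) (hf : ∀ x ∈ X, f x < minN X) :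
    ∃ Y ⊆ X, Y ∈ LargeStar θ n ∧ ∀ x ∈ Y, ∀ y ∈ Y, f x = f y := by
  have hgt : ∀ x ∈ X.erase (minN X), minN X < x := fun x hx =>
    lt_of_le_of_ne (minN_le (Finset.mem_of_mem_erase hx))
      (Finset.ne_of_mem_erase hx).symm
  obtain ⟨hXne, hrest⟩ := hX
  have hrep : List.replicate (n + 2) (minN X)
      = (List.replicate n (minN X) ++ [minN X]) ++ [minN X] := by
    rw [List.replicate_add]
    simp
  rw [hrep, mulSeq_append, mulSeq_append] at hrest
  have hrest' : X.erase (minN X) ∈ MulK θ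
      (MulK θ (MulSeq θ (LargeStar θ (n + 1)) (List.replicate n (minN X))) (minN X))
      (minN X) := hrest
  obtain ⟨Gw, hGwM, hGwsub, hGwp⟩ := hrest'
  choose Hw hHwM hHwsub hHwp using hGwM
  have hsubP := fun (r s : Fin (minN X)) =>
    mulSeq_rep_exists_sub (show 1 ≤ minN X by omega) n _ (hHwM r s)
  choose P hPL hPsub using hsubP
  have hPGw : ∀ r s, P r s ⊆ Gw r := fun r s => (hPsub r s).trans (hHwsub r s)
  have hPX : ∀ r s, P r s ⊆ X.erase (minN X) := fun r s => (hPGw r s).trans (hGwsub r)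
  have h0 : (0 : ℕ) < minN X := by omega
  have h1 : (1 : ℕ) < minN X := by omega
  set Z : Fin (minN X + 1) → Finset ℕ := fun j =>
    if j.val = 0 then P ⟨0, h0⟩ ⟨0, h0⟩ else P ⟨j.val - 1, by omega⟩ ⟨1, h1⟩ with hZdef
  have hZL : ∀ j, Z j ∈ LargeStar θ (n + 1) := by
    intro j
    simp only [hZdef]
    split <;> exact hPL _ _
  have hZsub : ∀ j, Z j ⊆ X.erase (minN X) := by
    intro j
    simp only [hZdef]
    split <;> exact hPX _ _
  have hZbelow : ∀ a b : Fin (minN X + 1), a < b → SetBelow (Z a) (Z b) := by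
    intro a b hab
    have hv : a.val < b.val := Fin.lt_def.mp hab
    have hb0 : ¬ b.val = 0 := by omega
    simp only [hZdef]
    rcases Nat.eq_zero_or_pos a.val with ha0 | ha0
    · rw [if_pos ha0, if_neg hb0]
      rcases Nat.lt_or_ge (b.val - 1) 1 with hb1 | hb1
      · have hbeq : (⟨b.val - 1, by omega⟩ : Fin (minN X)) = ⟨0, h0⟩ := Fin.ext (show b.val - 1 = 0 by omega)
        rw [hbeq]
        refine setBelow_mono (hPsub _ _) (hPsub _ _) ?_
        exact ((hHwp ⟨0, h0⟩) ⟨0, h0⟩ ⟨1, h1⟩ (Fin.mk_lt_mk.mpr (by omega))).1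
      · refine setBelow_mono (hPGw _ _) (hPGw _ _) ?_
        exact (hGwp ⟨0, h0⟩ ⟨b.val - 1, by omega⟩
          (Fin.lt_def.mpr (show 0 < b.val - 1 by omega))).1
    · rw [if_neg (by omega), if_neg hb0]
      refine setBelow_mono (hPGw _ _) (hPGw _ _) ?_
      exact (hGwp ⟨a.val - 1, by omega⟩ ⟨b.val - 1, by omega⟩
        (Fin.lt_def.mpr (show a.val - 1 < b.val - 1 by omega))).1
  obtain ⟨Y, hYsub, hYL, hYhom⟩ :=
    main_lemma θ X f (minN X) h3 hgt hsp hf n Z hZsub hZL hZbelow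
  refine ⟨Y, ?_, hYL, hYhom⟩
  refine hYsub.trans (Finset.biUnion_subset.mpr fun j _ => ?_)
  exact (hZsub j).trans (Finset.erase_subset _ _)
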